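/- Let P and Q be probability mass functions on a common finite nonempty set A, with Q strictly positive on A, and let Q_min = min_{a ∈ A} Q(a). Then the Rényi divergence of order ∞ (in nats) satisfies D_∞(P‖Q) = ln( max_{a ∈ A} P(a)/Q(a) ) ≤ ln(1 + |P−Q|/(2·Q_min)), where |P−Q| = Σ_{a ∈ A} |P(a) − Q(a)|. -/

import Mathlib

theorem renyi_infty_le_tv {A : Type*} [Fintype A] [Nonempty A]
    (P Q : A → ℝ) (hP : ∀ a, 0 ≤ P a) (hPsum : ∑ a, P a = 1)
    (hQ : ∀ a, 0 < Q a) (hQsum : ∑ a, Q a = 1) :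
    Real.log (⨆ a, P a / Q a) ≤
      Real.log (1 + (∑ a, |P a - Q a|) / (2 * ⨅ a, Q a)) := by
  set S : ℝ := ∑ a, |P a - Q a| with hS
  have hSnn : 0 ≤ S := Finset.sum_nonneg fun a _ => abs_nonneg _
  -- infimum of Q is positive
  obtain ⟨a0, ha0⟩ := Finite.exists_min Q
  have hQmin_pos : 0 < ⨅ a, Q a := lt_of_lt_of_le (hQ a0) (le_ciInf ha0)
  have hQmin_le : ∀ a, (⨅ b, Q b) ≤ Q a := fun a =>
    ciInf_le ⟨Q a0, by rintro x ⟨b, rfl⟩; exact ha0 b⟩ a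
  -- key: P a - Q a ≤ S / 2
  have hkey : ∀ a, P a - Q a ≤ S / 2 := by
    intro a
    have hsum0 : ∑ b, (P b - Q b) = 0 := by
      rw [Finset.sum_sub_distrib, hPsum, hQsum]; ring
    have hsum : ∑ b, ((P b - Q b) + |P b - Q b|) = S := by
      rw [Finset.sum_add_distrib, hsum0, zero_add]
    have hterm : (P a - Q a) + |P a - Q a| ≤ S := by
      rw [← hsum]
      exact Finset.single_le_sum (f := fun b => (P b - Q b) + |P b - Q b|)
        (fun b _ => by show 0 ≤ (P b - Q b) + |P b - Q b|; nlinarith [le_abs_self (Q b - P b), abs_sub_comm (P b) (Q b)]) (Finset.mem_univ a)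
    nlinarith [le_abs_self (P a - Q a)]
  -- pointwise ratio bound
  have hratio : ∀ a, P a / Q a ≤ 1 + S / (2 * ⨅ b, Q b) := by
    intro a
    rcases le_or_gt (P a) (Q a) with h | h
    · have : P a / Q a ≤ 1 := (div_le_one (hQ a)).2 h
      have : 0 ≤ S / (2 * ⨅ b, Q b) := by positivity
      linarith
    · have h1 : (P a - Q a) / Q a ≤ (S / 2) / (⨅ b, Q b) :=
        div_le_div₀ (by positivity) (hkey a) hQmin_pos (hQmin_le a)
      have h2 : P a / Q a = 1 + (P a - Q a) / Q a := by
        have := (hQ a).ne'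
        field_simp
        ring
      rw [h2]
      have : (S / 2) / (⨅ b, Q b) = S / (2 * ⨅ b, Q b) := by
        rw [div_div]
      linarith [h1, this ▸ h1]
  -- sup positive
  obtain ⟨a1, ha1⟩ : ∃ a, 0 < P a := by
    by_contra h
    push_neg at h
    have : ∑ a, P a = 0 := Finset.sum_eq_zero fun a _ => le_antisymm (h a) (hP a)
    rw [hPsum] at this; norm_num at this
  have hsup_pos : 0 < ⨆ a, P a / Q a :=
    lt_of_lt_of_le (div_pos ha1 (hQ a1)) (le_ciSup (f := fun a => P a / Q a) (Finite.bddAbove_range _) a1)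
  exact Real.log_le_log hsup_pos (ciSup_le hratio)
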